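/- Let u₁, …, uₙ and w₁, …, w_m be pairwise distinct complex numbers. Then the (n−2) × m matrix with entries 1/((w_j − u₁)(w_j − u₂)(w_j − u_t)) for 3 ≤ t ≤ n, 1 ≤ j ≤ m, has rank equal to min(n−2, m). -/

import Mathlib

open Polynomial in
lemma key_cauchy_indep {k p : ℕ} (x : Fin k → ℂ) (z : Fin p → ℂ)
    (hx : Function.Injective x) (hz : Function.Injective z)
    (hxz : ∀ i j, z j ≠ x i) (hkp : k ≤ p)
    (c : Fin k → ℂ) (h : ∀ j, ∑ i, c i * (z j - x i)⁻¹ = 0) : c = 0 := by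
  rcases Nat.eq_zero_or_pos k with hk | hk
  · subst hk; funext i; exact i.elim0
  classical
  set P : Polynomial ℂ := ∑ i, Polynomial.C (c i) *
    ∏ s ∈ Finset.univ.erase i, (Polynomial.X - Polynomial.C (x s)) with hP
  have heval : ∀ ξ : ℂ, P.eval ξ = ∑ i, c i * ∏ s ∈ Finset.univ.erase i, (ξ - x s) := by
    intro ξ
    simp [hP, Polynomial.eval_finset_sum, Polynomial.eval_prod]
  have hdeg : P.natDegree < p := by
    have h1 : P.natDegree ≤ k - 1 := by
      apply Polynomial.natDegree_sum_le_of_forall_le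
      intro i _
      refine le_trans (Polynomial.natDegree_C_mul_le _ _) ?_
      rw [Polynomial.natDegree_prod_of_monic]
      · simp [Finset.card_erase_of_mem]
      · intro s _; exact Polynomial.monic_X_sub_C _
    omega
  have hP0 : P = 0 := by
    refine Polynomial.eq_zero_of_natDegree_lt_card_of_eval_eq_zero P hz (fun j => ?_)
      (by simpa using hdeg)
    rw [heval]
    have key2 : ∀ i : Fin k, ∏ s ∈ Finset.univ.erase i, (z j - x s)
        = (z j - x i)⁻¹ * ∏ s, (z j - x s) := by
      intro i
      rw [← Finset.mul_prod_erase Finset.univ _ (Finset.mem_univ i),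
        inv_mul_cancel_left₀ (sub_ne_zero_of_ne (hxz i j))]
    calc ∑ i, c i * ∏ s ∈ Finset.univ.erase i, (z j - x s)
        = (∑ i, c i * (z j - x i)⁻¹) * ∏ s, (z j - x s) := by
          rw [Finset.sum_mul]
          exact Finset.sum_congr rfl fun i _ => by rw [key2 i, mul_assoc]
      _ = 0 := by rw [h j, zero_mul]
  funext t
  have h1 : P.eval (x t) = 0 := by rw [hP0]; simp
  rw [heval, Finset.sum_eq_single t] at h1
  · have hne : ∏ s ∈ Finset.univ.erase t, (x t - x s) ≠ 0 := by
      rw [Finset.prod_ne_zero_iff]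
      intro s hs
      exact sub_ne_zero_of_ne fun hh => (Finset.mem_erase.1 hs).1 (hx hh).symm
    have := (mul_eq_zero.1 h1).resolve_right hne
    simpa using this
  · intro i _ hit
    have : ∏ s ∈ Finset.univ.erase i, (x t - x s) = 0 :=
      Finset.prod_eq_zero (Finset.mem_erase.2 ⟨hit.symm, Finset.mem_univ t⟩) (sub_self _)
    rw [this, mul_zero]
  · intro ht; exact absurd (Finset.mem_univ t) ht

/-- For pairwise distinct complex numbers `u₁, …, uₙ` (`n ≥ 3`) and `w₁, …, w_m`,
the `(n-2) × m` matrix with entries `1/((w_j - u₁)(w_j - u₂)(w_j - u_t))`,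
`3 ≤ t ≤ n`, `1 ≤ j ≤ m`, has full rank `min (n-2) m`. -/
theorem stmt3 (n m : ℕ) (hn : 3 ≤ n) (u : Fin n → ℂ) (w : Fin m → ℂ)
    (hdist : Function.Injective (Sum.elim u w : Fin n ⊕ Fin m → ℂ)) :
    Matrix.rank (Matrix.of fun (t : Fin (n - 2)) (j : Fin m) =>
      ((w j - u ⟨0, by omega⟩) * (w j - u ⟨1, by omega⟩) *
        (w j - u ⟨t.val + 2, by have := t.isLt; omega⟩))⁻¹) = min (n - 2) m := by
  classical
  have hu : Function.Injective u := fun i j h => by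
    simpa using hdist (a₁ := Sum.inl i) (a₂ := Sum.inl j) h
  have hw : Function.Injective w := fun i j h => by
    simpa using hdist (a₁ := Sum.inr i) (a₂ := Sum.inr j) h
  have huw : ∀ i j, u i ≠ w j := fun i j h => by
    simpa using hdist (a₁ := Sum.inl i) (a₂ := Sum.inr j) h
  set a : ℂ := u ⟨0, by omega⟩ with ha
  set b : ℂ := u ⟨1, by omega⟩ with hb
  set v : Fin (n - 2) → ℂ := fun t => u ⟨t.val + 2, by have := t.isLt; omega⟩ with hv
  have hvinj : Function.Injective v := by
    intro s t h
    have := hu h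
    have := congrArg Fin.val this
    simp only at this
    exact Fin.ext (by omega)
  have hwa : ∀ j, w j - a ≠ 0 := fun j =>
    sub_ne_zero_of_ne fun h => huw _ j h.symm
  have hwb : ∀ j, w j - b ≠ 0 := fun j =>
    sub_ne_zero_of_ne fun h => huw _ j h.symm
  have hwv : ∀ j t, w j ≠ v t := fun j t h => huw _ j h.symm
  set M : Matrix (Fin (n - 2)) (Fin m) ℂ :=
    Matrix.of (fun (t : Fin (n - 2)) (j : Fin m) =>
      ((w j - a) * (w j - b) * (w j - v t))⁻¹) with hM
  show M.rank = min (n - 2) m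
  rcases le_or_gt (n - 2) m with hc | hc
  · -- rows independent
    have hli : LinearIndependent ℂ M := by
      refine Fintype.linearIndependent_iff.mpr ?_
      intro g hg
      have hj : ∀ j, ∑ t, g t * (w j - v t)⁻¹ = 0 := by
        intro j
        have h0 := congrFun hg j
        simp only [Finset.sum_apply, Pi.smul_apply, smul_eq_mul, Pi.zero_apply, hM,
          Matrix.of_apply] at h0
        have h1 := congrArg (fun z => ((w j - a) * (w j - b)) * z) h0
        simp only [Finset.mul_sum, mul_zero] at h1
        rw [← h1]
        refine Finset.sum_congr rfl fun t _ => ?_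
        rw [mul_inv]
        have hAB : (w j - a) * (w j - b) ≠ 0 := mul_ne_zero (hwa j) (hwb j)
        calc g t * (w j - v t)⁻¹
            = ((w j - a) * (w j - b) * ((w j - a) * (w j - b))⁻¹) * (g t * (w j - v t)⁻¹) := by
              rw [mul_inv_cancel₀ hAB, one_mul]
          _ = (w j - a) * (w j - b) * (g t * (((w j - a) * (w j - b))⁻¹ * (w j - v t)⁻¹)) := by
              ring
      have := key_cauchy_indep v w hvinj hw (fun t j => hwv j t) hc g hj
      exact fun t => congrFun this t
    rw [LinearIndependent.rank_matrix (M := M) hli]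
    simp [min_eq_left hc]
  · -- columns independent
    rw [← Matrix.rank_transpose]
    have hli : LinearIndependent ℂ M.transpose := by
      refine Fintype.linearIndependent_iff.mpr ?_
      intro g hg
      set c : Fin m → ℂ := fun j => -(g j * ((w j - a) * (w j - b))⁻¹) with hcdef
      have ht : ∀ t, ∑ j, c j * (v t - w j)⁻¹ = 0 := by
        intro t
        have h0 := congrFun hg t
        simp only [Finset.sum_apply, Pi.smul_apply, smul_eq_mul, Pi.zero_apply, hM,
          Matrix.transpose_apply, Matrix.of_apply] at h0
        rw [← h0]
        refine Finset.sum_congr rfl fun j _ => ?_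
        have hAB : (w j - a) * (w j - b) ≠ 0 := mul_ne_zero (hwa j) (hwb j)
        rw [hcdef, show v t - w j = -(w j - v t) from (neg_sub _ _).symm, inv_neg, mul_inv]
        ring
      have hc0 := key_cauchy_indep w v hw hvinj (fun j t => fun h => hwv j t h.symm)
        (le_of_lt hc) c ht
      intro j
      have := congrFun hc0 j
      simp only [hcdef, Pi.zero_apply, neg_eq_zero, mul_eq_zero, inv_eq_zero] at this
      rcases this with h | h | h
      · exact h
      · exact absurd h (hwa j)
      · exact absurd h (hwb j)
    rw [LinearIndependent.rank_matrix (M := M.transpose) hli]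
    simp [min_eq_right (le_of_lt hc)]
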